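/- Let n ≥ 2 and let G = ⟨a, b | (ab)^n⟩. Then the element ab has order exactly n in G. -/

import Mathlib

/-- The relator (ab)^n in the free group on two generators
(`false` = a, `true` = b). -/
def heckoidRel (n : ℕ) : FreeGroup Bool :=
  (FreeGroup.of false * FreeGroup.of true) ^ n

/-- The one-relator group G = ⟨a, b | (ab)^n⟩. -/
abbrev HeckoidGroup (n : ℕ) : Type :=
  PresentedGroup ({heckoidRel n} : Set (FreeGroup Bool))

/-- In G = ⟨a, b | (ab)^n⟩, the element ab has order exactly n. -/
theorem orderOf_ab (n : ℕ) (hn : 2 ≤ n) :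
    orderOf ((PresentedGroup.of false * PresentedGroup.of true : HeckoidGroup n)) = n := by
  haveI : NeZero n := ⟨by omega⟩
  set x : HeckoidGroup n := PresentedGroup.of false * PresentedGroup.of true with hx
  -- x^n = 1
  have hxn : x ^ n = 1 := by
    have : x ^ n = QuotientGroup.mk (heckoidRel n) := by
      rfl
    rw [this]
    refine (QuotientGroup.eq_one_iff (heckoidRel n)).mpr ?_
    exact Subgroup.subset_normalClosure (Set.mem_singleton _)
  have hdvd : orderOf x ∣ n := orderOf_dvd_of_pow_eq_one hxn
  -- homomorphism to Multiplicative (ZMod n)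
  let g : Bool → Multiplicative (ZMod n) := fun b => if b then 1 else Multiplicative.ofAdd 1
  have hg : ∀ r ∈ ({heckoidRel n} : Set (FreeGroup Bool)), FreeGroup.lift g r = 1 := by
    intro r hr
    rw [Set.mem_singleton_iff] at hr
    subst hr
    have : FreeGroup.lift g (heckoidRel n) = (Multiplicative.ofAdd (1 : ZMod n)) ^ n := by
      simp [heckoidRel, g]
    rw [this]
    rw [← ofAdd_nsmul]
    simp [ZMod.natCast_self]
  let f : HeckoidGroup n →* Multiplicative (ZMod n) := PresentedGroup.toGroup hg
  have hfx : f x = Multiplicative.ofAdd (1 : ZMod n) := by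
    simp [hx, f, PresentedGroup.toGroup.of, g]
  have hord : orderOf (f x) = n := by
    rw [hfx]
    rw [orderOf_ofAdd_eq_addOrderOf, ZMod.addOrderOf_one]
  have hfx1 : f x ^ orderOf x = 1 := by rw [← map_pow, pow_orderOf_eq_one, map_one]
  have hdvd2 : orderOf (f x) ∣ orderOf x := orderOf_dvd_of_pow_eq_one hfx1
  rw [hord] at hdvd2
  exact Nat.dvd_antisymm hdvd hdvd2
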